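/- Reformulation of the universal marker property: for a Boolean network f and a marker M, all minimal trap spaces of f match M if and only if for every configuration x that does not match M there exists a configuration y ∈ c(TS_f(x)) with c(TS_f(y)) ≠ c(TS_f(x)). -/
import Mathlib


/-- The set of vertices of a subcube `h : Fin n → Option Bool`. -/
def vertices {n : ℕ} (h : Fin n → Option Bool) : Set (Fin n → Bool) :=
  {x | ∀ (i : Fin n) (b : Bool), h i = some b → x i = b}

/-- A subcube `h` is a trap space of the Boolean network `f` if it is closed by `f`. -/
def IsTrapSpace {n : ℕ} (f : (Fin n → Bool) → (Fin n → Bool))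
    (h : Fin n → Option Bool) : Prop :=
  ∀ x ∈ vertices h, f x ∈ vertices h

/-- A trap space is minimal if no trap space has a strictly smaller vertex set. -/
def IsMinimalTrapSpace {n : ℕ} (f : (Fin n → Bool) → (Fin n → Bool))
    (h : Fin n → Option Bool) : Prop :=
  IsTrapSpace f h ∧ ∀ h', IsTrapSpace f h' → ¬ (vertices h' ⊂ vertices h)

/-- `h` is the smallest trap space of `f` containing the configuration `x` (i.e. `TS_f(x)`). -/
def IsSmallestTrapSpace {n : ℕ} (f : (Fin n → Bool) → (Fin n → Bool))
    (x : Fin n → Bool) (h : Fin n → Option Bool) : Prop :=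
  IsTrapSpace f h ∧ x ∈ vertices h ∧
    ∀ h', IsTrapSpace f h' → x ∈ vertices h' → vertices h ⊆ vertices h'

/-- A configuration `x` matches a marker `M`. -/
def confMatches {n : ℕ} (x : Fin n → Bool) (M : Fin n → Option Bool) : Prop :=
  ∀ (i : Fin n) (b : Bool), M i = some b → x i = b

/-- A subcube `h` matches a marker `M`. -/
def subcubeMatches {n : ℕ} (h M : Fin n → Option Bool) : Prop :=
  ∀ (i : Fin n) (b : Bool), M i = some b → h i = some b

/-- The perturbed Boolean network `f/P`. -/
def perturb {n : ℕ} (f : (Fin n → Bool) → (Fin n → Bool))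
    (P : Fin n → Option Bool) : (Fin n → Bool) → (Fin n → Bool) :=
  fun x i => (P i).getD (f x i)

lemma base_mem {n : ℕ} (h : Fin n → Option Bool) :
    (fun i => (h i).getD false) ∈ vertices h := by
  intro i b hb; simp [hb]

lemma combine_spec {n : ℕ} {f : (Fin n → Bool) → (Fin n → Bool)}
    {h1 h2 : Fin n → Option Bool} {x : Fin n → Bool}
    (t1 : IsTrapSpace f h1) (t2 : IsTrapSpace f h2)
    (hx1 : x ∈ vertices h1) (hx2 : x ∈ vertices h2) :
    ∃ h3, IsTrapSpace f h3 ∧ vertices h3 = vertices h1 ∩ vertices h2 := by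
  refine ⟨fun i => (h1 i).orElse (fun _ => h2 i), ?_, ?_⟩
  · have hv : vertices (fun i => (h1 i).orElse (fun _ => h2 i)) =
        vertices h1 ∩ vertices h2 := by
      ext y
      constructor
      · intro hy
        constructor
        · intro i b hb
          exact hy i b (by simp [Option.orElse, hb])
        · intro i b hb
          cases hc : h1 i with
          | none => exact hy i b (by simp [Option.orElse, hc, hb])
          | some b' =>
            have : b' = b := by rw [← hx1 i b' hc, ← hx2 i b hb]
            exact this ▸ hy i b' (by simp [Option.orElse, hc])
      · rintro ⟨hy1, hy2⟩ i b hb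
        cases hc : h1 i with
        | none => simp [Option.orElse, hc] at hb; exact hy2 i b hb
        | some b' =>
          simp [Option.orElse, hc] at hb; exact hb ▸ hy1 i b' hc
    intro y hy
    rw [hv] at hy ⊢
    exact ⟨t1 y hy.1, t2 y hy.2⟩
  · ext y
    constructor
    · intro hy
      constructor
      · intro i b hb
        exact hy i b (by simp [Option.orElse, hb])
      · intro i b hb
        cases hc : h1 i with
        | none => exact hy i b (by simp [Option.orElse, hc, hb])
        | some b' =>
          have : b' = b := by rw [← hx1 i b' hc, ← hx2 i b hb]
          exact this ▸ hy i b' (by simp [Option.orElse, hc])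
    · rintro ⟨hy1, hy2⟩ i b hb
      cases hc : h1 i with
      | none => simp [Option.orElse, hc] at hb; exact hy2 i b hb
      | some b' =>
        simp [Option.orElse, hc] at hb; exact hb ▸ hy1 i b' hc

lemma exists_smallest {n : ℕ} (f : (Fin n → Bool) → (Fin n → Bool)) (x : Fin n → Bool) :
    ∃ h, IsSmallestTrapSpace f x h := by
  classical
  let S : Set ℕ := {k | ∃ h, IsTrapSpace f h ∧ x ∈ vertices h ∧ (vertices h).ncard = k}
  have hS : S.Nonempty := by
    refine ⟨(vertices (fun _ : Fin n => none)).ncard, (fun _ => none), ?_, ?_, rfl⟩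
    · intro y _ i b hb; simp at hb
    · intro i b hb; simp at hb
  obtain ⟨h, th, xh, hcard⟩ := Nat.sInf_mem hS
  refine ⟨h, th, xh, ?_⟩
  intro h' th' xh'
  obtain ⟨h3, t3, v3⟩ := combine_spec th th' xh xh'
  have hsub : vertices h3 ⊆ vertices h := v3 ▸ Set.inter_subset_left
  have hx3 : x ∈ vertices h3 := v3 ▸ ⟨xh, xh'⟩
  have hle : sInf S ≤ (vertices h3).ncard := Nat.sInf_le ⟨h3, t3, hx3, rfl⟩
  have heq : vertices h3 = vertices h :=
    Set.eq_of_subset_of_ncard_le hsub (hcard ▸ hle) (Set.toFinite _)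
  rw [← heq, v3]; exact Set.inter_subset_right

/-- reformulation of the universal marker property. -/
theorem universal_marker_property_iff {n : ℕ}
    (f : (Fin n → Bool) → (Fin n → Bool)) (M : Fin n → Option Bool) :
    (∀ h : Fin n → Option Bool, IsMinimalTrapSpace f h → subcubeMatches h M) ↔
      (∀ x : Fin n → Bool, ¬ confMatches x M →
        ∀ tsx : Fin n → Option Bool, IsSmallestTrapSpace f x tsx →
          ∃ y ∈ vertices tsx, ∀ tsy : Fin n → Option Bool,
            IsSmallestTrapSpace f y tsy → vertices tsy ≠ vertices tsx) := by
  constructor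
  · intro H x hnm tsx stsx
    by_contra hc
    push_neg at hc
    have hmin : IsMinimalTrapSpace f tsx := by
      refine ⟨stsx.1, fun h' th' hss => ?_⟩
      have hy' : (fun i => (h' i).getD false) ∈ vertices h' := base_mem h'
      have hy : (fun i => (h' i).getD false) ∈ vertices tsx := hss.1 hy'
      obtain ⟨tsy, stsy, heq⟩ := hc _ hy
      have hsub : vertices tsy ⊆ vertices h' := stsy.2.2 h' th' hy'
      rw [heq] at hsub
      exact hss.2 hsub
    exact hnm fun i b hMi => stsx.2.1 i b (H tsx hmin i b hMi)
  · intro H h hmin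
    have key : ∀ x ∈ vertices h, confMatches x M := by
      intro x hx
      by_contra hnm
      obtain ⟨tsx, stsx⟩ := exists_smallest f x
      obtain ⟨y, hy, hyne⟩ := H x hnm tsx stsx
      have hsub : vertices tsx ⊆ vertices h := stsx.2.2 h hmin.1 hx
      obtain ⟨tsy, stsy⟩ := exists_smallest f y
      have hysub : vertices tsy ⊆ vertices tsx := stsy.2.2 tsx stsx.1 hy
      have hne := hyne tsy stsy
      have hss : vertices tsy ⊂ vertices h :=
        ⟨hysub.trans hsub, fun hcon => hne (subset_antisymm hysub (hsub.trans hcon))⟩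
      exact hmin.2 tsy stsy.1 hss
    intro i b hMi
    have hx0 : (fun j => (h j).getD false) ∈ vertices h := base_mem h
    have hm0 := key _ hx0 i b hMi
    cases hc : h i with
    | some b' =>
      simp only [hc] at hm0
      simp only [Option.getD_some] at hm0
      rw [hm0]
    | none =>
      exfalso
      simp only [hc, Option.getD_none] at hm0
      have hx1 : (fun j => if j = i then true else (h j).getD false) ∈ vertices h := by
        intro j c hjc
        by_cases hji : j = i
        · rw [hji] at hjc; rw [hc] at hjc; exact absurd hjc (by simp)
        · simp [hji, hjc]
      have hm1 := key _ hx1 i b hMi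
      simp only [if_pos rfl] at hm1
      rw [← hm0] at hm1
      exact absurd hm1 (by simp)
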